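/- arXiv:1404.4415 — 2 statements merged into one kernel-verified Lean document; each statement's English description precedes it below -/
import Mathlib

section
/- Let λ ∈ 𝒫^l_n, let t ∈ Std(λ) and let 2 ≤ j ≤ n. Then j−1 ⇙_t j (that is, either j−1 and j lie in the same component of t with j strictly lower and strictly to the left of j−1, or j−1 lies in a component with strictly smaller index than the component containing j) if and only if w_t has a reduced expression beginning with s_{j−1}. -/
namespace FS

open scoped Classical

/-- A node `(r, c, m)`: row `r`, column `c`, component `m` (all 1-based). -/
abbrev Node := ℕ × ℕ × ℕ

/-- Membership of a node in the Young diagram of the multipartition `p`,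
where `p m r` is the `r`-th part of the `m`-th component. -/
def InDiag (p : ℕ → ℕ → ℕ) (A : Node) : Prop :=
  1 ≤ A.2.1 ∧ A.2.1 ≤ p A.2.2 A.1

/-- `p` is an `l`-multipartition of `n` (components indexed `1,…,l`, rows indexed `1,…`). -/
def IsMP (l n : ℕ) (p : ℕ → ℕ → ℕ) : Prop :=
  (∀ m r, (m = 0 ∨ l < m ∨ r = 0 ∨ n < r) → p m r = 0) ∧
  (∀ m r, 1 ≤ r → p m (r + 1) ≤ p m r) ∧
  (∑ m ∈ Finset.Icc 1 l, ∑ r ∈ Finset.Icc 1 n, p m r) = n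

/-- Total size of an `l`-multicomposition (rows bounded by `n`). -/
def mpSize (l n : ℕ) (p : ℕ → ℕ → ℕ) : ℕ :=
  ∑ m ∈ Finset.Icc 1 l, ∑ r ∈ Finset.Icc 1 n, p m r

/-- Size of the `m`-th component. -/
def compSize (n : ℕ) (p : ℕ → ℕ → ℕ) (m : ℕ) : ℕ :=
  ∑ r ∈ Finset.Icc 1 n, p m r

/-- Length of column `c` of component `m`, i.e. `(p^(m))'_c`. -/
def colLen (n : ℕ) (p : ℕ → ℕ → ℕ) (m c : ℕ) : ℕ :=
  ((Finset.Icc 1 n).filter fun r => c ≤ p m r).card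

/-- Dominance order on `l`-multicompositions: `Dom l N p q` means `p ⊵ q`. -/
def Dom (l N : ℕ) (p q : ℕ → ℕ → ℕ) : Prop :=
  ∀ m r, 1 ≤ m → m ≤ l →
    (∑ m' ∈ Finset.Icc 1 (m - 1), compSize N q m') + ∑ r' ∈ Finset.Icc 1 r, q m r' ≤
      (∑ m' ∈ Finset.Icc 1 (m - 1), compSize N p m') + ∑ r' ∈ Finset.Icc 1 r, p m r'

/-- `t` is a `p`-tableau: a bijection from the diagram of `p` onto `{1,…,n}`. -/
def IsTab (n : ℕ) (p : ℕ → ℕ → ℕ) (t : Node → ℕ) : Prop :=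
  (∀ A, InDiag p A → 1 ≤ t A ∧ t A ≤ n) ∧
  (∀ A B, InDiag p A → InDiag p B → t A = t B → A = B) ∧
  (∀ i, 1 ≤ i → i ≤ n → ∃ A, InDiag p A ∧ t A = i)

/-- Entries increase from left to right along each row. -/
def RowStrict (p : ℕ → ℕ → ℕ) (t : Node → ℕ) : Prop :=
  ∀ r c m, InDiag p (r, c, m) → InDiag p (r, c + 1, m) → t (r, c, m) < t (r, c + 1, m)

/-- Entries increase down each column. -/
def ColStrict (p : ℕ → ℕ → ℕ) (t : Node → ℕ) : Prop :=
  ∀ r c m, InDiag p (r, c, m) → InDiag p (r + 1, c, m) → t (r, c, m) < t (r + 1, c, m)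

/-- A standard tableau is both row-strict and column-strict. -/
def IsStd (p : ℕ → ℕ → ℕ) (t : Node → ℕ) : Prop := RowStrict p t ∧ ColStrict p t

/-- The tableau `t_λ`, obtained by writing `1,…,n` in order down successive columns
from left to right (components from `l` down to `1`). -/
def colTab (l n : ℕ) (p : ℕ → ℕ → ℕ) : Node → ℕ := fun A =>
  (∑ m' ∈ Finset.Icc (A.2.2 + 1) l, compSize n p m') +
    (∑ c' ∈ Finset.Icc 1 (A.2.1 - 1), colLen n p A.2.2 c') + A.1

/-- The tableau `t^λ`, obtained by writing `1,…,n` in order along successive rows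
from top to bottom (components from `1` up to `l`). -/
def rowTab (n : ℕ) (p : ℕ → ℕ → ℕ) : Node → ℕ := fun A =>
  (∑ m' ∈ Finset.Icc 1 (A.2.2 - 1), compSize n p m') +
    (∑ r' ∈ Finset.Icc 1 (A.1 - 1), p A.2.2 r') + A.2.1

/-- The Coxeter generator `s_i = (i, i+1)` of the symmetric group. -/
def sw (i : ℕ) : Equiv.Perm ℕ := Equiv.swap i (i + 1)

/-- The product `s_{i_1} ⋯ s_{i_k}` corresponding to a word `L = [i_1,…,i_k]`. -/
def wordProd (L : List ℕ) : Equiv.Perm ℕ := (L.map sw).prod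

/-- `L` is an expression for `w` in the Coxeter generators `s_1,…,s_{n-1}` of `S_n`. -/
def IsWord (n : ℕ) (L : List ℕ) (w : Equiv.Perm ℕ) : Prop :=
  (∀ i ∈ L, 1 ≤ i ∧ i + 1 ≤ n) ∧ wordProd L = w

/-- The Coxeter length of `w ∈ S_n`. -/
noncomputable def len (n : ℕ) (w : Equiv.Perm ℕ) : ℕ :=
  sInf {k | ∃ L, IsWord n L w ∧ L.length = k}

/-- `L` is a reduced expression for `w ∈ S_n`. -/
def IsReduced (n : ℕ) (L : List ℕ) (w : Equiv.Perm ℕ) : Prop :=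
  IsWord n L w ∧ L.length = len n w

/-- The Bruhat order on `S_n`: `x ≤ w` iff some reduced expression for `w` has an
expression for `x` as a subsequence. -/
def BruhatLE (n : ℕ) (x w : Equiv.Perm ℕ) : Prop :=
  ∃ L, IsReduced n L w ∧ ∃ L', L'.Sublist L ∧ wordProd L' = x

/-- Strict Bruhat order. -/
def BruhatLT (n : ℕ) (x w : Equiv.Perm ℕ) : Prop := BruhatLE n x w ∧ x ≠ w

/-- The left (weak) order on `S_n`: `x ≤_L w` iff `ℓ(w) = ℓ(w x⁻¹) + ℓ(x)`. -/
def LeftLE (n : ℕ) (x w : Equiv.Perm ℕ) : Prop :=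
  len n w = len n (w * x⁻¹) + len n x

/-- `w` is a permutation of `{1,…,n}` (fixing everything else). -/
def PermOf (n : ℕ) (w : Equiv.Perm ℕ) : Prop := ∀ i, i = 0 ∨ n < i → w i = i

/-- `w` is the permutation sending the base tableau `base` to the tableau `t`
(e.g. `w = w_t` when `base = t_λ`). -/
def IsPermOfTab (n : ℕ) (p : ℕ → ℕ → ℕ) (base t : Node → ℕ) (w : Equiv.Perm ℕ) : Prop :=
  PermOf n w ∧ ∀ A, InDiag p A → w (base A) = t A

/-- `Shape(t↓j)`: the multicomposition whose `(m, r)` entry is the number of nodes in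
row `r` of component `m` whose entry under `t` is at most `j`. -/
def shape (n : ℕ) (p : ℕ → ℕ → ℕ) (t : Node → ℕ) (j : ℕ) : ℕ → ℕ → ℕ :=
  fun m r => ((Finset.Icc 1 n).filter fun c => c ≤ p m r ∧ t (r, c, m) ≤ j).card

/-- `Shape(t↓j)'`: the conjugate multicomposition, whose `(m, c)` entry is the number of
nodes in column `c` of component `l + 1 - m` whose entry under `t` is at most `j`. -/
def shapeConj (l n : ℕ) (p : ℕ → ℕ → ℕ) (t : Node → ℕ) (j : ℕ) : ℕ → ℕ → ℕ :=
  fun m c => ((Finset.Icc 1 n).filter fun r => c ≤ p (l + 1 - m) r ∧ t (r, c, l + 1 - m) ≤ j).card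

/-- `A` lies weakly to the left of `B`. -/
def WeaklyLeft (A B : Node) : Prop :=
  B.2.2 < A.2.2 ∨ (A.2.2 = B.2.2 ∧ A.2.1 ≤ B.2.1)

/-- `A` lies weakly above `B`. -/
def WeaklyAbove (A B : Node) : Prop :=
  A.2.2 < B.2.2 ∨ (A.2.2 = B.2.2 ∧ A.1 ≤ B.1)

/-- `A` lies weakly to the right of `B`. -/
def WeaklyRight (A B : Node) : Prop :=
  A.2.2 < B.2.2 ∨ (A.2.2 = B.2.2 ∧ B.2.1 ≤ A.2.1)

/-- `t` (a `mu`-tableau) is `lam`-column-dominated on `1,…,j`: each `i ≤ j` appears in `t`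
at least as far to the left as it does in `t_lam`. -/
def ColDomOn (l n : ℕ) (lam mu : ℕ → ℕ → ℕ) (t : Node → ℕ) (j : ℕ) : Prop :=
  ∀ i A B, 1 ≤ i → i ≤ j → InDiag mu A → t A = i → InDiag lam B →
    colTab l n lam B = i → WeaklyLeft A B

/-- `t` is weakly `lam`-column-dominated on `1,…,j`: each `i ≤ j` appears in `t` in a
component at least as far to the left as it does in `t_lam`. -/
def WColDomOn (l n : ℕ) (lam mu : ℕ → ℕ → ℕ) (t : Node → ℕ) (j : ℕ) : Prop :=
  ∀ i A B, 1 ≤ i → i ≤ j → InDiag mu A → t A = i → InDiag lam B →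
    colTab l n lam B = i → B.2.2 ≤ A.2.2

/-- `t` (a `mu`-tableau) is `lam`-row-dominated on `1,…,j`: each `i ≤ j` appears in `t`
at least as high as it does in `t^lam`. -/
def RowDomOn (n : ℕ) (lam mu : ℕ → ℕ → ℕ) (t : Node → ℕ) (j : ℕ) : Prop :=
  ∀ i A B, 1 ≤ i → i ≤ j → InDiag mu A → t A = i → InDiag lam B →
    rowTab n lam B = i → WeaklyAbove A B

/-- The multipartition `λ_L(c, m)`: the first `c` columns of component `m`, followed by
components `m+1,…,l`. -/
def leftPart (lam : ℕ → ℕ → ℕ) (c m : ℕ) : ℕ → ℕ → ℕ := fun k r =>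
  if k = 0 then 0 else if k = 1 then min (lam m r) c else lam (m + k - 1) r

/-- The multipartition `λ_R(c, m)`: components `1,…,m-1`, followed by the part of
component `m` after its first `c` columns. -/
def rightPart (lam : ℕ → ℕ → ℕ) (c m : ℕ) : ℕ → ℕ → ℕ := fun k r =>
  if k < m then lam k r else if k = m then lam m r - c else 0

/-- The multipartition `λ_T(r₀, m)`: components `1,…,m-1`, followed by the first `r₀`
rows of component `m`. -/
def topPart (lam : ℕ → ℕ → ℕ) (r₀ m : ℕ) : ℕ → ℕ → ℕ := fun k r =>
  if k < m then lam k r else if k = m then (if r ≤ r₀ then lam m r else 0) else 0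

/-- The multipartition `λ_B(r₀, m)`: the rows of component `m` after row `r₀`, followed
by components `m+1,…,l`. -/
def botPart (lam : ℕ → ℕ → ℕ) (r₀ m : ℕ) : ℕ → ℕ → ℕ := fun k r =>
  if k = 0 ∨ r = 0 then 0 else if k = 1 then lam m (r₀ + r) else lam (m + k - 1) r

/-- The glued tableau `t_L # t_R`: places `1,…,n_L` on the left part as in `t_L`, and
places `n_L + t_R(A)` at the node corresponding to each node `A` of the right part. -/
def glueLR (nL c m : ℕ) (tL tR : Node → ℕ) : Node → ℕ := fun A =>
  if A.2.2 < m then nL + tR A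
  else if A.2.2 = m then
    (if A.2.1 ≤ c then tL (A.1, A.2.1, 1) else nL + tR (A.1, A.2.1 - c, m))
  else tL (A.1, A.2.1, A.2.2 - m + 1)

/-- The tableau `t⁺` obtained from a tableau `t` of `μ_R(1,m)` by increasing all entries
by `k`, adjoining a first column with entries `1,…,k` to component `m`, and adjoining
empty components `m+1,…,l`. -/
def addFirstCol (k m : ℕ) (t : Node → ℕ) : Node → ℕ := fun A =>
  if A.2.2 = m then (if A.2.1 = 1 then A.1 else k + t (A.1, A.2.1 - 1, m))
  else k + t A

/-- The tableau `t⁺` obtained from a tableau `t` of `μ_L(d-1,m)` by adjoining empty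
components `1,…,m-1` and adjoining a column `d` to component `m` with entries
`nk+1,…,nk+k` from top to bottom. -/
def addLastCol (nk m d : ℕ) (t : Node → ℕ) : Node → ℕ := fun A =>
  if A.2.2 = m then (if A.2.1 = d then nk + A.1 else t (A.1, A.2.1, 1))
  else t (A.1, A.2.1, A.2.2 - m + 1)

/-- The `i`-th smallest element of a finite set of naturals (1-based). -/
def nthElt (S : Finset ℕ) (i : ℕ) : ℕ := (S.sort (· ≤ ·)).getD (i - 1) 0

/-- The set `S_B` of entries of `t_λ` lying in the bottom region (component `> m`, or
component `m` in a row `> r₀`). -/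
noncomputable def SB (l n : ℕ) (lam : ℕ → ℕ → ℕ) (r₀ m : ℕ) : Finset ℕ :=
  (Finset.Icc 1 n).filter fun i =>
    ∃ A, InDiag lam A ∧ colTab l n lam A = i ∧ (m < A.2.2 ∨ (A.2.2 = m ∧ r₀ < A.1))

/-- The glued tableau `t #̄ s`: on the bottom region the entries are `lab_B ∘ t` and on
the top region they are `lab_T ∘ s`, where `lab_B`, `lab_T` are the order-preserving
bijections onto `S_B`, `S_T`. -/
def glueBT (S_B S_T : Finset ℕ) (r₀ m : ℕ) (tB tT : Node → ℕ) : Node → ℕ := fun A =>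
  if A.2.2 < m then nthElt S_T (tT A)
  else if A.2.2 = m then
    (if A.1 ≤ r₀ then nthElt S_T (tT A) else nthElt S_B (tB (A.1 - r₀, A.2.1, 1)))
  else nthElt S_B (tB (A.1, A.2.1, A.2.2 - m + 1))

/-- The residue of a node `(r, c, m)` with respect to the multicharge `κ`:
`κ_m + c - r` in `ℤ/eℤ` (with `ZMod 0 = ℤ` encoding `e = ∞`). -/
def resNode (e : ℕ) (κ : ℕ → ZMod e) (A : Node) : ZMod e :=
  κ A.2.2 + (A.2.1 : ZMod e) - (A.1 : ZMod e)


noncomputable def invn (n : ℕ) (w : Equiv.Perm ℕ) : ℕ :=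
  (((Finset.Icc 1 n) ×ˢ (Finset.Icc 1 n)).filter fun p => p.1 < p.2 ∧ w p.2 < w p.1).card

lemma sw_lt {i x y : ℕ} (hx : x < y) (hne : ¬(x = i ∧ y = i + 1)) : sw i x < sw i y := by
  unfold sw
  rcases eq_or_ne x i with h | hxi
  · have hy : y ≠ i + 1 := fun hh => hne ⟨h, hh⟩
    have hiy : i < y := h ▸ hx
    rw [h, Equiv.swap_apply_left, Equiv.swap_apply_of_ne_of_ne (by omega) hy]
    omega
  rcases eq_or_ne x (i + 1) with h | hxi1
  · have hiy : i + 1 < y := h ▸ hx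
    rw [h, Equiv.swap_apply_right, Equiv.swap_apply_of_ne_of_ne (by omega) (by omega)]
    omega
  rw [Equiv.swap_apply_of_ne_of_ne hxi hxi1]
  rcases eq_or_ne y i with h | hyi
  · have : x < i := h ▸ hx
    rw [h, Equiv.swap_apply_left]; omega
  rcases eq_or_ne y (i + 1) with h | hyi1
  · have : x < i + 1 := h ▸ hx
    rw [h, Equiv.swap_apply_right]; omega
  rw [Equiv.swap_apply_of_ne_of_ne hyi hyi1]; exact hx

lemma sw_mul_self (i : ℕ) : sw i * sw i = 1 := Equiv.swap_mul_self _ _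

lemma permOf_sw_mul {n i : ℕ} (hi1 : 1 ≤ i) (hi2 : i + 1 ≤ n) {w : Equiv.Perm ℕ}
    (hw : PermOf n w) : PermOf n (sw i * w) := by
  intro x hx
  have h1 := hw x hx
  have : (sw i * w) x = sw i x := by rw [Equiv.Perm.mul_apply, h1]
  rw [this]; simp only [sw]; rw [Equiv.swap_apply_of_ne_of_ne (by omega) (by omega)]

lemma mem_range_of_permOf {n : ℕ} {w : Equiv.Perm ℕ} (hw : PermOf n w) {x : ℕ}
    (h1 : 1 ≤ x) (h2 : x ≤ n) : 1 ≤ w⁻¹ x ∧ w⁻¹ x ≤ n := by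
  by_contra hc
  push_neg at hc
  have hfix : w (w⁻¹ x) = w⁻¹ x := hw _ (by omega)
  have : w (w⁻¹ x) = x := w.apply_symm_apply x
  omega

lemma invn_sw_mul_of_lt {n i : ℕ} {w : Equiv.Perm ℕ} (hw : PermOf n w)
    (hi1 : 1 ≤ i) (hi2 : i + 1 ≤ n) (h : w⁻¹ i < w⁻¹ (i + 1)) :
    invn n (sw i * w) = invn n w + 1 := by
  set a := w⁻¹ i with ha
  set b := w⁻¹ (i + 1) with hb
  have hwa : w a = i := w.apply_symm_apply i
  have hwb : w b = i + 1 := w.apply_symm_apply (i + 1)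
  obtain ⟨ha1, ha2⟩ := mem_range_of_permOf hw hi1 (by omega)
  obtain ⟨hb1, hb2⟩ := mem_range_of_permOf hw (by omega) hi2
  have key : ((Finset.Icc 1 n ×ˢ Finset.Icc 1 n).filter
        fun p => p.1 < p.2 ∧ (sw i * w) p.2 < (sw i * w) p.1)
      = insert (a, b) ((Finset.Icc 1 n ×ˢ Finset.Icc 1 n).filter
        fun p => p.1 < p.2 ∧ w p.2 < w p.1) := by
    ext ⟨x, y⟩
    simp only [Finset.mem_insert, Finset.mem_filter, Finset.mem_product, Finset.mem_Icc,
      Prod.mk.injEq]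
    simp only [Equiv.Perm.mul_apply]
    constructor
    · rintro ⟨⟨hx, hy⟩, hxy, hlt⟩
      rcases lt_trichotomy (w x) (w y) with hv | hv | hv
      · left
        by_cases hvv : w x = i ∧ w y = i + 1
        · constructor
          · have : w x = w a := by rw [hvv.1, hwa]
            exact w.injective this
          · have : w y = w b := by rw [hvv.2, hwb]
            exact w.injective this
        · exact absurd (sw_lt hv hvv) (by omega)
      · exact absurd (w.injective hv) (by omega)
      · exact Or.inr ⟨⟨hx, hy⟩, hxy, hv⟩
    · rintro (⟨rfl, rfl⟩ | ⟨⟨hx, hy⟩, hxy, hlt⟩)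
      · refine ⟨⟨⟨ha1, ha2⟩, hb1, hb2⟩, h, ?_⟩
        rw [hwa, hwb]; simp only [sw]; rw [Equiv.swap_apply_left, Equiv.swap_apply_right]
        omega
      · refine ⟨⟨⟨hx.1, hx.2⟩, hy⟩, hxy, ?_⟩
        apply sw_lt hlt
        rintro ⟨h1, h2⟩
        have hya : y = a := w.injective (by rw [h1, hwa])
        have hxb : x = b := w.injective (by rw [h2, hwb])
        omega
  have hnotmem : (a, b) ∉ ((Finset.Icc 1 n ×ˢ Finset.Icc 1 n).filter
      fun p => p.1 < p.2 ∧ w p.2 < w p.1) := by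
    simp only [Finset.mem_filter, Finset.mem_product, Finset.mem_Icc]
    rintro ⟨-, -, hlt⟩
    rw [hwa, hwb] at hlt
    omega
  unfold invn
  rw [key, Finset.card_insert_of_notMem hnotmem]

lemma invn_sw_mul_of_gt {n i : ℕ} {w : Equiv.Perm ℕ} (hw : PermOf n w)
    (hi1 : 1 ≤ i) (hi2 : i + 1 ≤ n) (h : w⁻¹ (i + 1) < w⁻¹ i) :
    invn n w = invn n (sw i * w) + 1 := by
  have hw' : PermOf n (sw i * w) := permOf_sw_mul hi1 hi2 hw
  have hinv : (sw i * w)⁻¹ = w⁻¹ * sw i := by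
    rw [mul_inv_rev]
    simp only [sw, Equiv.swap_inv]
  have h1 : (sw i * w)⁻¹ i = w⁻¹ (i + 1) := by
    rw [hinv, Equiv.Perm.mul_apply]; simp only [sw]; rw [Equiv.swap_apply_left]
  have h2 : (sw i * w)⁻¹ (i + 1) = w⁻¹ i := by
    rw [hinv, Equiv.Perm.mul_apply]; simp only [sw]; rw [Equiv.swap_apply_right]
  have := invn_sw_mul_of_lt hw' hi1 hi2 (by rw [h1, h2]; exact h)
  rw [← mul_assoc, sw_mul_self, one_mul] at this
  omega

lemma wordProd_nil : wordProd [] = 1 := rfl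

lemma wordProd_cons (a : ℕ) (L : List ℕ) : wordProd (a :: L) = sw a * wordProd L := by
  simp [wordProd]

lemma permOf_one {n : ℕ} : PermOf n (1 : Equiv.Perm ℕ) := fun i _ => rfl

lemma permOf_wordProd {n : ℕ} {L : List ℕ} (h : ∀ i ∈ L, 1 ≤ i ∧ i + 1 ≤ n) :
    PermOf n (wordProd L) := by
  induction L with
  | nil => exact permOf_one
  | cons a L ih =>
    rw [wordProd_cons]
    exact permOf_sw_mul (h a List.mem_cons_self).1 (h a List.mem_cons_self).2
      (ih fun i hi => h i (List.mem_cons_of_mem a hi))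

lemma invn_one {n : ℕ} : invn n (1 : Equiv.Perm ℕ) = 0 := by
  unfold invn
  rw [Finset.card_eq_zero, Finset.filter_eq_empty_iff]
  rintro ⟨x, y⟩ -
  simp only [Equiv.Perm.one_apply]
  omega

lemma invn_le_length {n : ℕ} {L : List ℕ} (h : ∀ i ∈ L, 1 ≤ i ∧ i + 1 ≤ n) :
    invn n (wordProd L) ≤ L.length := by
  induction L with
  | nil => rw [wordProd_nil]; simp [invn_one]
  | cons a L ih =>
    have ha := h a List.mem_cons_self
    have hL : ∀ i ∈ L, 1 ≤ i ∧ i + 1 ≤ n := fun i hi => h i (List.mem_cons_of_mem a hi)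
    have hu : PermOf n (wordProd L) := permOf_wordProd hL
    rw [wordProd_cons]
    rcases lt_trichotomy ((wordProd L)⁻¹ a) ((wordProd L)⁻¹ (a + 1)) with hc | hc | hc
    · have := invn_sw_mul_of_lt hu ha.1 ha.2 hc
      have := ih hL
      simp only [List.length_cons]; omega
    · exact absurd ((Equiv.injective _) hc) (by omega)
    · have := invn_sw_mul_of_gt hu ha.1 ha.2 hc
      have := ih hL
      simp only [List.length_cons]; omega

lemma eq_one_of_strictMono {n : ℕ} {w : Equiv.Perm ℕ} (hw : PermOf n w)
    (hmono : ∀ x y, 1 ≤ x → x < y → y ≤ n → w x < w y) : w = 1 := by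
  have hmaps : ∀ x, 1 ≤ x → x ≤ n → 1 ≤ w x ∧ w x ≤ n := by
    intro x h1 h2
    by_contra hc
    push_neg at hc
    have hfix : w (w x) = w x := hw (w x) (by omega)
    have := w.injective hfix
    omega
  have hge : ∀ x, 1 ≤ x → x ≤ n → x ≤ w x := by
    intro x
    induction x with
    | zero => omega
    | succ k ih =>
      intro _ h2
      rcases Nat.eq_zero_or_pos k with hk | hk
      · subst hk; exact (hmaps 1 le_rfl h2).1
      · have h3 := ih hk (by omega)
        have h4 := hmono k (k + 1) hk (by omega) h2
        omega
  have himg : Finset.image w (Finset.Icc 1 n) = Finset.Icc 1 n := by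
    apply Finset.eq_of_subset_of_card_le
    · intro y hy
      simp only [Finset.mem_image, Finset.mem_Icc] at hy ⊢
      obtain ⟨x, hx, rfl⟩ := hy
      exact hmaps x hx.1 hx.2
    · rw [Finset.card_image_of_injective _ w.injective]
  have hsum : ∑ x ∈ Finset.Icc 1 n, w x = ∑ x ∈ Finset.Icc 1 n, x := by
    conv_rhs => rw [← himg]
    rw [Finset.sum_image fun x _ y _ hxy => w.injective hxy]
  have hall : ∀ x ∈ Finset.Icc 1 n, w x = x := by
    by_contra hc
    push_neg at hc
    obtain ⟨x, hx, hne⟩ := hc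
    simp only [Finset.mem_Icc] at hx
    have hlt : x < w x := lt_of_le_of_ne (hge x hx.1 hx.2) (Ne.symm hne)
    have : ∑ x ∈ Finset.Icc 1 n, x < ∑ x ∈ Finset.Icc 1 n, w x :=
      Finset.sum_lt_sum (fun y hy => by
        simp only [Finset.mem_Icc] at hy; exact hge y hy.1 hy.2)
        ⟨x, Finset.mem_Icc.mpr hx, hlt⟩
    omega
  ext x
  rcases Nat.eq_zero_or_pos x with hx | hx
  · subst hx; exact hw 0 (Or.inl rfl)
  rcases le_or_gt x n with hxn | hxn
  · exact hall x (Finset.mem_Icc.mpr ⟨hx, hxn⟩)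
  · exact hw x (Or.inr hxn)

lemma permOf_inv {n : ℕ} {w : Equiv.Perm ℕ} (hw : PermOf n w) : PermOf n w⁻¹ := by
  intro x hx
  have h1 : w x = x := hw x hx
  have := congrArg (w⁻¹ : Equiv.Perm ℕ) h1
  rw [show w⁻¹ (w x) = x from w.symm_apply_apply x] at this
  exact this.symm

lemma eq_one_of_invn_eq_zero {n : ℕ} {w : Equiv.Perm ℕ} (hw : PermOf n w)
    (h : invn n w = 0) : w = 1 := by
  apply eq_one_of_strictMono hw
  intro x y hx hxy hy
  by_contra hc
  push_neg at hc
  have hne : w x ≠ w y := fun he => by have := w.injective he; omega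
  have hmem : ((x, y) : ℕ × ℕ) ∈ ((Finset.Icc 1 n ×ˢ Finset.Icc 1 n).filter
      fun p => p.1 < p.2 ∧ w p.2 < w p.1) := by
    simp only [Finset.mem_filter, Finset.mem_product, Finset.mem_Icc]
    exact ⟨⟨⟨hx, by omega⟩, by omega, hy⟩, hxy, by omega⟩
  have : ((Finset.Icc 1 n ×ˢ Finset.Icc 1 n).filter
      fun p => p.1 < p.2 ∧ w p.2 < w p.1) = ∅ := Finset.card_eq_zero.mp h
  rw [this] at hmem
  exact absurd hmem (Finset.notMem_empty _)

lemma exists_word_invn {n : ℕ} (k : ℕ) : ∀ (w : Equiv.Perm ℕ), PermOf n w → invn n w = k →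
    ∃ L, (∀ i ∈ L, 1 ≤ i ∧ i + 1 ≤ n) ∧ wordProd L = w ∧ L.length = k := by
  induction k with
  | zero =>
    intro w hw h
    exact ⟨[], by simp, by rw [wordProd_nil, eq_one_of_invn_eq_zero hw h], rfl⟩
  | succ k ih =>
    intro w hw h
    have hdesc : ∃ i, 1 ≤ i ∧ i + 1 ≤ n ∧ w⁻¹ (i + 1) < w⁻¹ i := by
      by_contra hc
      push_neg at hc
      have hwinv : PermOf n w⁻¹ := permOf_inv hw
      have hconsec : ∀ i, 1 ≤ i → i + 1 ≤ n → w⁻¹ i < w⁻¹ (i + 1) := by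
        intro i h1 h2
        have h3 := hc i h1 h2
        have hne : w⁻¹ i ≠ w⁻¹ (i + 1) := fun he => by
          have := (Equiv.injective _) he; omega
        omega
      have hmono : ∀ x y, 1 ≤ x → x < y → y ≤ n → w⁻¹ x < w⁻¹ y := by
        intro x y hx hxy hy
        induction y with
        | zero => omega
        | succ m ihm =>
          rcases Nat.lt_or_ge x m with hxm | hxm
          · exact lt_trans (ihm hxm (by omega)) (hconsec m (by omega) (by omega))
          · have : x = m := by omega
            subst this
            exact hconsec x hx hy
      have : w⁻¹ = 1 := eq_one_of_strictMono hwinv hmono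
      have hw1 : w = 1 := by
        have := congrArg Inv.inv this
        simpa using this
      rw [hw1, invn_one] at h
      omega
    obtain ⟨i, hi1, hi2, hdes⟩ := hdesc
    have hw' : PermOf n (sw i * w) := permOf_sw_mul hi1 hi2 hw
    have hk : invn n (sw i * w) = k := by
      have := invn_sw_mul_of_gt hw hi1 hi2 hdes
      omega
    obtain ⟨L, hL1, hL2, hL3⟩ := ih (sw i * w) hw' hk
    refine ⟨i :: L, ?_, ?_, by simp [hL3]⟩
    · intro x hx
      rcases List.mem_cons.mp hx with rfl | hx'
      · exact ⟨hi1, hi2⟩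
      · exact hL1 x hx'
    · rw [wordProd_cons, hL2, ← mul_assoc, sw_mul_self, one_mul]

lemma len_eq_invn {n : ℕ} {w : Equiv.Perm ℕ} (hw : PermOf n w) : len n w = invn n w := by
  obtain ⟨L, hL1, hL2, hL3⟩ := exists_word_invn (invn n w) w hw rfl
  have hmem : invn n w ∈ {k | ∃ L, IsWord n L w ∧ L.length = k} := ⟨L, ⟨hL1, hL2⟩, hL3⟩
  apply le_antisymm
  · exact Nat.sInf_le hmem
  · have hne : {k | ∃ L, IsWord n L w ∧ L.length = k}.Nonempty := ⟨_, hmem⟩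
    obtain ⟨L', ⟨hL'1, hL'2⟩, hlen⟩ := Nat.sInf_mem hne
    calc invn n w = invn n (wordProd L') := by rw [hL'2]
    _ ≤ L'.length := invn_le_length hL'1
    _ = len n w := hlen

lemma descent_iff_reduced {n i : ℕ} {w : Equiv.Perm ℕ} (hw : PermOf n w)
    (hi1 : 1 ≤ i) (hi2 : i + 1 ≤ n) :
    w⁻¹ (i + 1) < w⁻¹ i ↔ ∃ L, IsReduced n (i :: L) w := by
  constructor
  · intro h
    have hw' : PermOf n (sw i * w) := permOf_sw_mul hi1 hi2 hw
    have hk : invn n w = invn n (sw i * w) + 1 := invn_sw_mul_of_gt hw hi1 hi2 h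
    obtain ⟨L, hL1, hL2, hL3⟩ := exists_word_invn (invn n (sw i * w)) _ hw' rfl
    refine ⟨L, ⟨⟨?_, ?_⟩, ?_⟩⟩
    · intro x hx
      rcases List.mem_cons.mp hx with rfl | hx'
      · exact ⟨hi1, hi2⟩
      · exact hL1 x hx'
    · rw [wordProd_cons, hL2, ← mul_assoc, sw_mul_self, one_mul]
    · rw [len_eq_invn hw]
      simp only [List.length_cons]
      omega
  · rintro ⟨L, ⟨⟨hrange, hprod⟩, hlen⟩⟩
    have hL : ∀ x ∈ L, 1 ≤ x ∧ x + 1 ≤ n := fun x hx => hrange x (List.mem_cons_of_mem i hx)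
    have hprod' : wordProd L = sw i * w := by
      rw [wordProd_cons] at hprod
      rw [← hprod, ← mul_assoc, sw_mul_self, one_mul]
    have hw' : PermOf n (sw i * w) := permOf_sw_mul hi1 hi2 hw
    have h1 : invn n (sw i * w) ≤ L.length := by
      rw [← hprod']; exact invn_le_length hL
    rw [len_eq_invn hw] at hlen
    simp only [List.length_cons] at hlen
    rcases lt_trichotomy (w⁻¹ (i + 1)) (w⁻¹ i) with hc | hc | hc
    · exact hc
    · exact absurd ((Equiv.injective _) hc) (by omega)
    · have := invn_sw_mul_of_lt hw hi1 hi2 hc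
      omega

section Tab
variable {l n : ℕ} {lam : ℕ → ℕ → ℕ} {t : Node → ℕ}

lemma part_mono (hlam : IsMP l n lam) {m r r' : ℕ} (h1 : 1 ≤ r') (h2 : r' ≤ r) :
    lam m r ≤ lam m r' := by
  induction r with
  | zero => omega
  | succ k ih =>
    rcases eq_or_lt_of_le h2 with h | h
    · rw [h]
    · have hk : r' ≤ k := by omega
      exact le_trans (hlam.2.1 m k (by omega)) (ih hk)

lemma inDiag_bounds (hlam : IsMP l n lam) {r c m : ℕ} (h : InDiag lam (r, c, m)) :
    1 ≤ m ∧ m ≤ l ∧ 1 ≤ r ∧ r ≤ n ∧ 1 ≤ c ∧ c ≤ n := by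
  obtain ⟨hc1, hc2⟩ := h
  simp only at hc1 hc2
  have hrange : 1 ≤ m ∧ m ≤ l ∧ 1 ≤ r ∧ r ≤ n := by
    by_contra hc
    have : lam m r = 0 := hlam.1 m r (by omega)
    omega
  obtain ⟨hm1, hm2, hr1, hr2⟩ := hrange
  refine ⟨hm1, hm2, hr1, hr2, hc1, ?_⟩
  have h1 : lam m r ≤ compSize n lam m :=
    Finset.single_le_sum (f := fun r' => lam m r') (fun _ _ => Nat.zero_le _)
      (Finset.mem_Icc.mpr ⟨hr1, hr2⟩)
  have h2 : compSize n lam m ≤ n :=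
    le_trans (Finset.single_le_sum (f := fun m' => compSize n lam m')
      (fun _ _ => Nat.zero_le _) (Finset.mem_Icc.mpr ⟨hm1, hm2⟩)) (le_of_eq hlam.2.2)
  omega

lemma le_colLen (hlam : IsMP l n lam) {r c m : ℕ} (h : InDiag lam (r, c, m)) :
    r ≤ colLen n lam m c := by
  obtain ⟨hm1, hm2, hr1, hr2, hc1, hc2⟩ := inDiag_bounds hlam h
  have hsub : Finset.Icc 1 r ⊆ (Finset.Icc 1 n).filter fun r' => c ≤ lam m r' := by
    intro r' hr'
    simp only [Finset.mem_Icc] at hr'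
    simp only [Finset.mem_filter, Finset.mem_Icc]
    exact ⟨⟨hr'.1, by omega⟩, le_trans h.2 (part_mono hlam hr'.1 hr'.2)⟩
  have := Finset.card_le_card hsub
  rwa [Nat.card_Icc, Nat.add_sub_cancel] at this

lemma compSize_eq_sum_colLen (hlam : IsMP l n lam) {m : ℕ} (hm1 : 1 ≤ m) (hm2 : m ≤ l) :
    compSize n lam m = ∑ c ∈ Finset.Icc 1 n, colLen n lam m c := by
  unfold colLen
  have hrw : ∀ c ∈ Finset.Icc 1 n, ((Finset.Icc 1 n).filter fun r => c ≤ lam m r).card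
      = ∑ r ∈ Finset.Icc 1 n, if c ≤ lam m r then 1 else 0 := fun c _ =>
    Finset.card_filter _ _
  rw [Finset.sum_congr rfl hrw, Finset.sum_comm]
  unfold compSize
  apply Finset.sum_congr rfl
  intro r hr
  simp only [Finset.mem_Icc] at hr
  have hle : lam m r ≤ n := by
    have h1 : lam m r ≤ compSize n lam m :=
      Finset.single_le_sum (f := fun r' => lam m r') (fun _ _ => Nat.zero_le _)
        (Finset.mem_Icc.mpr hr)
    have h2 : compSize n lam m ≤ n :=
      le_trans (Finset.single_le_sum (f := fun m' => compSize n lam m')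
        (fun _ _ => Nat.zero_le _) (Finset.mem_Icc.mpr ⟨hm1, hm2⟩)) (le_of_eq hlam.2.2)
    omega
  rw [← Finset.card_filter]
  have : (Finset.Icc 1 n).filter (fun c => c ≤ lam m r) = Finset.Icc 1 (lam m r) := by
    ext c
    simp only [Finset.mem_filter, Finset.mem_Icc]
    omega
  rw [this, Nat.card_Icc]
  omega

lemma colTab_bounds (hlam : IsMP l n lam) {r c m : ℕ} (h : InDiag lam (r, c, m)) :
    (∑ m' ∈ Finset.Icc (m + 1) l, compSize n lam m') < colTab l n lam (r, c, m) ∧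
    colTab l n lam (r, c, m) ≤ ∑ m' ∈ Finset.Icc m l, compSize n lam m' := by
  obtain ⟨hm1, hm2, hr1, hr2, hc1, hc2⟩ := inDiag_bounds hlam h
  have hsplit : ∑ m' ∈ Finset.Icc m l, compSize n lam m'
      = compSize n lam m + ∑ m' ∈ Finset.Icc (m + 1) l, compSize n lam m' := by
    have : Finset.Icc m l = insert m (Finset.Icc (m + 1) l) := by
      ext x; simp only [Finset.mem_insert, Finset.mem_Icc]; omega
    rw [this, Finset.sum_insert (by simp only [Finset.mem_Icc]; omega)]
  have hinner : (∑ c' ∈ Finset.Icc 1 (c - 1), colLen n lam m c') + r ≤ compSize n lam m := by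
    have h1 : (∑ c' ∈ Finset.Icc 1 (c - 1), colLen n lam m c') + r
        ≤ ∑ c' ∈ Finset.Icc 1 c, colLen n lam m c' := by
      have hc : c = (c - 1) + 1 := by omega
      rw [hc, Finset.sum_Icc_succ_top (by omega)]
      have := le_colLen hlam h
      rw [← hc]
      omega
    have h2 : ∑ c' ∈ Finset.Icc 1 c, colLen n lam m c'
        ≤ ∑ c' ∈ Finset.Icc 1 n, colLen n lam m c' :=
      Finset.sum_le_sum_of_subset (Finset.Icc_subset_Icc_right hc2)
    rw [compSize_eq_sum_colLen hlam hm1 hm2]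
    omega
  unfold colTab
  simp only
  omega

lemma colTab_lt_of_col_lt (hlam : IsMP l n lam) {r1 c1 r2 c2 m : ℕ}
    (hA : InDiag lam (r1, c1, m)) (hB : InDiag lam (r2, c2, m)) (h : c1 < c2) :
    colTab l n lam (r1, c1, m) < colTab l n lam (r2, c2, m) := by
  obtain ⟨_, _, hr1, _, hc1, _⟩ := inDiag_bounds hlam hA
  obtain ⟨_, _, hr2, _, _, _⟩ := inDiag_bounds hlam hB
  have h1 : (∑ c' ∈ Finset.Icc 1 (c1 - 1), colLen n lam m c') + r1
      ≤ ∑ c' ∈ Finset.Icc 1 c1, colLen n lam m c' := by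
    have hc : c1 = (c1 - 1) + 1 := by omega
    rw [hc, Finset.sum_Icc_succ_top (by omega)]
    have := le_colLen hlam hA
    rw [← hc]
    omega
  have h2 : ∑ c' ∈ Finset.Icc 1 c1, colLen n lam m c'
      ≤ ∑ c' ∈ Finset.Icc 1 (c2 - 1), colLen n lam m c' :=
    Finset.sum_le_sum_of_subset (Finset.Icc_subset_Icc_right (by omega))
  unfold colTab
  simp only
  omega

lemma row_chain (hlam : IsMP l n lam) (hstd : IsStd lam t) {r c1 c2 m : ℕ}
    (h : c1 < c2) (h1 : InDiag lam (r, c1, m)) (h2 : InDiag lam (r, c2, m)) :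
    t (r, c1, m) < t (r, c2, m) := by
  have hc1 : 1 ≤ c1 := h1.1
  have key : ∀ c2, c1 + 1 ≤ c2 → InDiag lam (r, c2, m) → t (r, c1, m) < t (r, c2, m) := by
    intro c2
    induction c2 with
    | zero => omega
    | succ k ih =>
      intro hk hk2
      rcases Nat.lt_or_ge c1 k with hck | hck
      · have hle : (k : ℕ) ≤ lam m r := by
          have := hk2.2
          simp only at this
          omega
        have hk' : InDiag lam (r, k, m) := ⟨show 1 ≤ k by omega, hle⟩
        exact lt_trans (ih (by omega) hk') (hstd.1 r k m hk' hk2)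
      · have : c1 = k := by omega
        subst this
        exact hstd.1 r c1 m h1 hk2
  exact key c2 h h2

lemma col_chain (hlam : IsMP l n lam) (hstd : IsStd lam t) {r1 r2 c m : ℕ}
    (h : r1 < r2) (h1 : InDiag lam (r1, c, m)) (h2 : InDiag lam (r2, c, m)) :
    t (r1, c, m) < t (r2, c, m) := by
  have hr1 : 1 ≤ r1 := (inDiag_bounds hlam h1).2.2.1
  have key : ∀ r2, r1 + 1 ≤ r2 → InDiag lam (r2, c, m) → t (r1, c, m) < t (r2, c, m) := by
    intro r2
    induction r2 with
    | zero => omega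
    | succ k ih =>
      intro hk hk2
      rcases Nat.lt_or_ge r1 k with hrk | hrk
      · have hle : c ≤ lam m k := by
          have ha := hk2.2
          have hb : lam m (k + 1) ≤ lam m k := hlam.2.1 m k (by omega)
          simp only at ha
          omega
        have hk' : InDiag lam (k, c, m) := ⟨h1.1, hle⟩
        exact lt_trans (ih (by omega) hk') (hstd.2 k c m hk' hk2)
      · have : r1 = k := by omega
        subst this
        exact hstd.2 r1 c m h1 hk2
  exact key r2 h h2

lemma cond_iff_colTab (hlam : IsMP l n lam) (hstd : IsStd lam t) {A B : Node}
    (hA : InDiag lam A) (hB : InDiag lam B) (hAB : t A < t B) :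
    ((A.2.2 = B.2.2 ∧ A.1 < B.1 ∧ B.2.1 < A.2.1) ∨ A.2.2 < B.2.2) ↔
      colTab l n lam B < colTab l n lam A := by
  obtain ⟨rA, cA, mA⟩ := A
  obtain ⟨rB, cB, mB⟩ := B
  simp only at *
  constructor
  · rintro (⟨rfl, hr, hc⟩ | hm)
    · exact colTab_lt_of_col_lt hlam hB hA hc
    · have hBb := (colTab_bounds hlam hB).2
      have hAb := (colTab_bounds hlam hA).1
      have hsub : ∑ m' ∈ Finset.Icc mB l, compSize n lam m'
          ≤ ∑ m' ∈ Finset.Icc (mA + 1) l, compSize n lam m' :=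
        Finset.sum_le_sum_of_subset (Finset.Icc_subset_Icc_left (by omega))
      omega
  · intro hlt
    rcases lt_trichotomy mA mB with hm | hm | hm
    · exact Or.inr hm
    · subst hm
      have hbA := inDiag_bounds hlam hA
      have hbB := inDiag_bounds hlam hB
      rcases lt_trichotomy cA cB with hc | hc | hc
      · exact absurd (colTab_lt_of_col_lt hlam hA hB hc) (by omega)
      · subst hc
        exfalso
        have hr : rB < rA := by
          unfold colTab at hlt
          simp only at hlt
          omega
        exact absurd (col_chain hlam hstd hr hB hA) (by omega)
      · left
        refine ⟨rfl, ?_, hc⟩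
        by_contra hr
        push_neg at hr
        rcases lt_or_eq_of_le hr with hr' | hr'
        · have hle : cA ≤ lam mA rB := by
            have h1 := hA.2
            simp only at h1
            exact le_trans h1 (part_mono hlam hbB.2.2.1 (le_of_lt hr'))
          have hC : InDiag lam (rB, cA, mA) := ⟨show 1 ≤ cA by omega, hle⟩
          have hx1 := row_chain hlam hstd hc hB hC
          have hx2 := col_chain hlam hstd hr' hC hA
          omega
        · subst hr'
          exact absurd (row_chain hlam hstd hc hB hA) (by omega)
    · exfalso
      have hAb := (colTab_bounds hlam hA).2
      have hBb := (colTab_bounds hlam hB).1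
      have hsub : ∑ m' ∈ Finset.Icc mA l, compSize n lam m'
          ≤ ∑ m' ∈ Finset.Icc (mB + 1) l, compSize n lam m' :=
        Finset.sum_le_sum_of_subset (Finset.Icc_subset_Icc_left (by omega))
      omega

end Tab

/-- For a standard `λ`-tableau `t` and `2 ≤ j ≤ n`: `j-1 ⇙_t j`
(i.e. `j` is strictly lower and strictly to the left of `j-1` in the same component, or
`j-1` lies in a component of strictly smaller index than `j`) iff `w_t` has a reduced
expression beginning with `s_{j-1}`. -/
theorem swarrow_iff_reduced_word_head (l n : ℕ) (hl : 1 ≤ l) (hn : 1 ≤ n)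
    (lam : ℕ → ℕ → ℕ) (hlam : IsMP l n lam)
    (t : Node → ℕ) (ht : IsTab n lam t) (hstd : IsStd lam t)
    (j : ℕ) (hj1 : 2 ≤ j) (hj2 : j ≤ n)
    (wt : Equiv.Perm ℕ) (hwt : IsPermOfTab n lam (colTab l n lam) t wt) :
    (∀ A B, InDiag lam A → t A = j - 1 → InDiag lam B → t B = j →
        ((A.2.2 = B.2.2 ∧ A.1 < B.1 ∧ B.2.1 < A.2.1) ∨ A.2.2 < B.2.2)) ↔
      ∃ L, IsReduced n ((j - 1) :: L) wt := by
  obtain ⟨hperm, hcompat⟩ := hwt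
  obtain ⟨A0, hA0, htA0⟩ := ht.2.2 (j - 1) (by omega) (by omega)
  obtain ⟨B0, hB0, htB0⟩ := ht.2.2 j (by omega) hj2
  have hred : (wt⁻¹ ((j - 1) + 1) < wt⁻¹ (j - 1)) ↔ ∃ L, IsReduced n ((j - 1) :: L) wt :=
    descent_iff_reduced hperm (by omega) (by omega)
  have hjj : (j - 1) + 1 = j := by omega
  rw [← hred, hjj]
  have hinv : ∀ A, InDiag lam A → wt⁻¹ (t A) = colTab l n lam A := by
    intro A hA
    have h1 : wt (colTab l n lam A) = t A := hcompat A hA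
    rw [← h1, show ∀ x, wt⁻¹ (wt x) = x from wt.symm_apply_apply]
  constructor
  · intro h
    have hc := h A0 B0 hA0 htA0 hB0 htB0
    have hlt := (cond_iff_colTab hlam hstd hA0 hB0 (by omega)).mp hc
    have hBv : wt⁻¹ j = colTab l n lam B0 := by rw [← htB0, hinv B0 hB0]
    have hAv : wt⁻¹ (j - 1) = colTab l n lam A0 := by rw [← htA0, hinv A0 hA0]
    rw [hBv, hAv]
    exact hlt
  · intro h A B hA htA hB htB
    apply (cond_iff_colTab hlam hstd hA hB (by omega)).mpr
    have hBv : wt⁻¹ j = colTab l n lam B := by rw [← htB, hinv B hB]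
    have hAv : wt⁻¹ (j - 1) = colTab l n lam A := by rw [← htA, hinv A hA]
    rw [← hBv, ← hAv]
    exact h

end FS
end

section
/- Let λ, μ ∈ 𝒫^l_n. Then Std_λ(μ) is non-empty if and only if λ ⊵ μ. -/
namespace FS

open scoped Classical

section Aux

open Finset

variable {l n : ℕ}

lemma isMP_part_le {p : ℕ → ℕ → ℕ} (hp : IsMP l n p) (m r : ℕ) : p m r ≤ n := by
  obtain ⟨h0, -, hsum⟩ := hp
  by_cases hm : 1 ≤ m ∧ m ≤ l ∧ 1 ≤ r ∧ r ≤ n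
  · obtain ⟨h1, h2, h3, h4⟩ := hm
    calc p m r ≤ ∑ r' ∈ Icc 1 n, p m r' :=
          Finset.single_le_sum (fun _ _ => Nat.zero_le _) (Finset.mem_Icc.mpr ⟨h3, h4⟩)
      _ ≤ ∑ m' ∈ Icc 1 l, ∑ r' ∈ Icc 1 n, p m' r' :=
          Finset.single_le_sum (f := fun m' => ∑ r' ∈ Icc 1 n, p m' r')
            (fun _ _ => Nat.zero_le _) (Finset.mem_Icc.mpr ⟨h1, h2⟩)
      _ = n := hsum
  · rw [h0 m r (by omega)]
    omega

lemma isMP_anti {p : ℕ → ℕ → ℕ} (hp : IsMP l n p) {m r r' : ℕ} (h1 : 1 ≤ r) (hrr : r ≤ r') :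
    p m r' ≤ p m r := by
  induction r', hrr using Nat.le_induction with
  | base => exact le_refl _
  | succ k hk ih => exact le_trans (hp.2.1 m k (by omega)) ih

lemma inDiag_bounds_s13 {p : ℕ → ℕ → ℕ} (hp : IsMP l n p) {A : Node} (hA : InDiag p A) :
    1 ≤ A.1 ∧ A.1 ≤ n ∧ 1 ≤ A.2.1 ∧ A.2.1 ≤ n ∧ 1 ≤ A.2.2 ∧ A.2.2 ≤ l := by
  obtain ⟨hc1, hc2⟩ := hA
  have hpos : 1 ≤ p A.2.2 A.1 := le_trans hc1 hc2
  have := hp.1 A.2.2 A.1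
  have hle := isMP_part_le hp A.2.2 A.1
  by_contra hcon
  push_neg at hcon
  have : p A.2.2 A.1 = 0 := hp.1 A.2.2 A.1 (by omega)
  omega

lemma count_le (k N : ℕ) : ∑ x ∈ Icc 1 N, (if x ≤ k then (1 : ℕ) else 0) = min k N := by
  rw [← Finset.card_filter]
  have : (Icc 1 N).filter (fun x => x ≤ k) = Icc 1 (min k N) := by
    ext x; simp [Finset.mem_Icc, Finset.mem_filter]; omega
  rw [this, Nat.card_Icc]
  omega

lemma colLen_le_n {p : ℕ → ℕ → ℕ} (m c : ℕ) : colLen n p m c ≤ n := by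
  have := Finset.card_filter_le (Icc 1 n) (fun r => c ≤ p m r)
  simpa [colLen, Nat.card_Icc] using this

/-- K2 : partial column sums as row-truncations. -/
lemma sum_colLen {p : ℕ → ℕ → ℕ} (m c : ℕ) :
    ∑ c' ∈ Icc 1 c, colLen n p m c' = ∑ r ∈ Icc 1 n, min (p m r) c := by
  unfold colLen
  simp_rw [Finset.card_filter]
  rw [Finset.sum_comm]
  exact Finset.sum_congr rfl fun r _ => count_le (p m r) c

lemma sum_colLen_n {p : ℕ → ℕ → ℕ} (hp : IsMP l n p) (m : ℕ) :
    ∑ c' ∈ Icc 1 n, colLen n p m c' = compSize n p m := by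
  rw [sum_colLen]
  exact Finset.sum_congr rfl fun r _ => by
    have := isMP_part_le hp m r; omega

lemma sum_Icc_split (f : ℕ → ℕ) {a b c : ℕ} (h1 : a ≤ b) (h2 : b ≤ c) :
    ∑ i ∈ Icc (a + 1) c, f i = ∑ i ∈ Icc (a + 1) b, f i + ∑ i ∈ Icc (b + 1) c, f i := by
  rw [Finset.Icc_add_one_left_eq_Ioc, Finset.Icc_add_one_left_eq_Ioc, Finset.Icc_add_one_left_eq_Ioc]
  exact (Finset.sum_Ioc_consecutive f h1 h2).symm

lemma sum_comp {p : ℕ → ℕ → ℕ} (hp : IsMP l n p) :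
    ∑ m' ∈ Icc 1 l, compSize n p m' = n := hp.2.2

lemma row_le_colLen {p : ℕ → ℕ → ℕ} (hp : IsMP l n p) {r c m : ℕ}
    (hA : InDiag p (r, c, m)) : r ≤ colLen n p m c := by
  obtain ⟨h1, h2, h3, h4, h5, h6⟩ := inDiag_bounds_s13 hp hA
  simp only at h1 h2 h3 h4 h5 h6
  have hsub : Icc 1 r ⊆ (Icc 1 n).filter (fun r' => c ≤ p m r') := by
    intro x hx
    simp only [Finset.mem_Icc] at hx
    simp only [Finset.mem_filter, Finset.mem_Icc]
    refine ⟨⟨hx.1, le_trans hx.2 h2⟩, le_trans hA.2 (isMP_anti hp hx.1 hx.2)⟩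
  calc r = (Icc 1 r).card := by rw [Nat.card_Icc]; omega
    _ ≤ _ := Finset.card_le_card hsub

/-- number of nodes weakly left of column `c` of component `m`. -/
def Wstat (l n : ℕ) (p : ℕ → ℕ → ℕ) (m c : ℕ) : ℕ :=
  (∑ m' ∈ Finset.Icc (m + 1) l, compSize n p m') + ∑ c' ∈ Finset.Icc 1 c, colLen n p m c'

lemma colTab_le_W {p : ℕ → ℕ → ℕ} (hp : IsMP l n p) {A : Node} (hA : InDiag p A) :
    colTab l n p A ≤ Wstat l n p A.2.2 A.2.1 := by
  obtain ⟨r, c, m⟩ := A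
  obtain ⟨h1, h2, h3, h4, h5, h6⟩ := inDiag_bounds_s13 hp hA
  simp only at h1 h2 h3 h4 h5 h6
  have hsplit : ∑ c' ∈ Icc 1 c, colLen n p m c'
      = ∑ c' ∈ Icc 1 (c - 1), colLen n p m c' + colLen n p m c := by
    have hc : c = (c - 1) + 1 := by omega
    rw [hc, Finset.sum_Icc_succ_top (by omega), ← hc]
  have hr := row_le_colLen hp hA
  simp only [colTab, Wstat, hsplit]
  omega

lemma Q_le_comp {p : ℕ → ℕ → ℕ} (hp : IsMP l n p) (m c : ℕ) :
    ∑ c' ∈ Icc 1 c, colLen n p m c' ≤ compSize n p m := by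
  rw [sum_colLen]
  exact Finset.sum_le_sum fun r _ => Nat.min_le_left _ _

lemma W_le_n {p : ℕ → ℕ → ℕ} (hp : IsMP l n p) {m : ℕ} (c : ℕ) (hm1 : 1 ≤ m) (hml : m ≤ l) :
    Wstat l n p m c ≤ n := by
  have h1 := Q_le_comp hp m c
  have h2 : compSize n p m + ∑ m' ∈ Icc (m + 1) l, compSize n p m'
      ≤ ∑ m' ∈ Icc 1 l, compSize n p m' := by
    have hs : ∑ m' ∈ Icc (0 + 1) l, compSize n p m'
        = ∑ m' ∈ Icc (0 + 1) m, compSize n p m' + ∑ m' ∈ Icc (m + 1) l, compSize n p m' :=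
      sum_Icc_split _ (by omega) hml
    have hm : compSize n p m ≤ ∑ m' ∈ Icc 1 m, compSize n p m' :=
      Finset.single_le_sum (fun _ _ => Nat.zero_le _) (by simp only [Finset.mem_Icc]; omega)
    simp only [Nat.zero_add] at hs
    omega
  have h3 := sum_comp hp
  simp only [Wstat]
  omega

lemma colTab_pos {p : ℕ → ℕ → ℕ} (hp : IsMP l n p) {A : Node} (hA : InDiag p A) :
    1 ≤ colTab l n p A := by
  have := (inDiag_bounds_s13 hp hA).1
  simp only [colTab]
  omega

lemma colTab_le_n {p : ℕ → ℕ → ℕ} (hp : IsMP l n p) {A : Node} (hA : InDiag p A) :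
    colTab l n p A ≤ n := by
  obtain ⟨h1, h2, h3, h4, h5, h6⟩ := inDiag_bounds_s13 hp hA
  exact le_trans (colTab_le_W hp hA) (W_le_n hp _ h5 h6)

/-- If `A` lies strictly to the right of `(m, c)` then its entry exceeds `Wstat m c`. -/
lemma W_lt_colTab {p : ℕ → ℕ → ℕ} (hp : IsMP l n p) {A : Node} (hA : InDiag p A)
    {m c : ℕ} (hml : m ≤ l)
    (hcond : A.2.2 < m ∨ (A.2.2 = m ∧ c < A.2.1)) :
    Wstat l n p m c < colTab l n p A := by
  obtain ⟨r₁, c₁, m₁⟩ := A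
  obtain ⟨h1, h2, h3, h4, h5, h6⟩ := inDiag_bounds_s13 hp hA
  simp only at h1 h2 h3 h4 h5 h6 hcond
  simp only [colTab, Wstat]
  rcases hcond with hlt | ⟨heq, hcc⟩
  · -- m₁ < m
    have hQ := Q_le_comp hp m c
    have hsplit : ∑ m' ∈ Icc (m₁ + 1) l, compSize n p m'
        = ∑ m' ∈ Icc (m₁ + 1) m, compSize n p m' + ∑ m' ∈ Icc (m + 1) l, compSize n p m' :=
      sum_Icc_split _ (by omega) hml
    have hm : compSize n p m ≤ ∑ m' ∈ Icc (m₁ + 1) m, compSize n p m' :=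
      Finset.single_le_sum (fun _ _ => Nat.zero_le _) (by simp only [Finset.mem_Icc]; omega)
    omega
  · -- m₁ = m, c < c₁
    subst heq
    have hmono : ∑ c' ∈ Icc 1 c, colLen n p m₁ c'
        ≤ ∑ c' ∈ Icc 1 (c₁ - 1), colLen n p m₁ c' :=
      Finset.sum_le_sum_of_subset (Finset.Icc_subset_Icc_right (by omega))
    omega

lemma colTab_inj {p : ℕ → ℕ → ℕ} (hp : IsMP l n p) {A B : Node}
    (hA : InDiag p A) (hB : InDiag p B) (h : colTab l n p A = colTab l n p B) : A = B := by
  obtain ⟨hA1, hA2, hA3, hA4, hA5, hA6⟩ := inDiag_bounds_s13 hp hA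
  obtain ⟨hB1, hB2, hB3, hB4, hB5, hB6⟩ := inDiag_bounds_s13 hp hB
  rcases lt_trichotomy A.2.2 B.2.2 with hm | hm | hm
  · exfalso
    have := W_lt_colTab hp hA (m := B.2.2) (c := B.2.1) hB6 (Or.inl hm)
    have h2 := colTab_le_W hp hB
    omega
  · rcases lt_trichotomy A.2.1 B.2.1 with hc | hc | hc
    · exfalso
      have := W_lt_colTab hp hB (m := A.2.2) (c := A.2.1) hA6 (Or.inr ⟨hm.symm, hc⟩)
      have h2 := colTab_le_W hp hA
      omega
    · have hr : A.1 = B.1 := by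
        simp only [colTab] at h
        rw [hm, hc] at h
        omega
      exact Prod.ext hr (Prod.ext hc hm)
    · exfalso
      have := W_lt_colTab hp hA (m := B.2.2) (c := B.2.1) hB6 (Or.inr ⟨hm, hc⟩)
      have h2 := colTab_le_W hp hB
      omega
  · exfalso
    have := W_lt_colTab hp hB (m := A.2.2) (c := A.2.1) hA6 (Or.inl hm)
    have h2 := colTab_le_W hp hA
    omega

end Aux

section Aux2

open Finset

variable {l n : ℕ}

/-- The region finset: diagram nodes weakly left of column `c` of component `m`. -/
noncomputable def RF (l n : ℕ) (p : ℕ → ℕ → ℕ) (m c : ℕ) : Finset Node :=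
  (Finset.Icc 1 n ×ˢ Finset.Icc 1 n ×ˢ Finset.Icc 1 l).filter
    (fun A => InDiag p A ∧ (m < A.2.2 ∨ (A.2.2 = m ∧ A.2.1 ≤ c)))

lemma mem_RF {p : ℕ → ℕ → ℕ} (hp : IsMP l n p) {m c : ℕ} {A : Node} :
    A ∈ RF l n p m c ↔ InDiag p A ∧ (m < A.2.2 ∨ (A.2.2 = m ∧ A.2.1 ≤ c)) := by
  simp only [RF, Finset.mem_filter, Finset.mem_product, Finset.mem_Icc]
  constructor
  · tauto
  · intro h
    obtain ⟨h1, h2, h3, h4, h5, h6⟩ := inDiag_bounds_s13 hp h.1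
    exact ⟨⟨⟨h1, h2⟩, ⟨h3, h4⟩, ⟨h5, h6⟩⟩, h⟩

lemma card_RF {p : ℕ → ℕ → ℕ} (hp : IsMP l n p) {m : ℕ} (c : ℕ) (hm1 : 1 ≤ m) (hml : m ≤ l) :
    (RF l n p m c).card = Wstat l n p m c := by
  classical
  have hind : ∀ r c' m', ((InDiag p ((r, c', m') : Node) ∧
      (m < m' ∨ (m' = m ∧ c' ≤ c))) ↔
      (1 ≤ c' ∧ (c' ≤ p m' r ∧ (m < m' ∨ (m' = m ∧ c' ≤ c))))) := by
    intro r c' m'; simp only [InDiag]; tauto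
  rw [RF, Finset.card_filter, Finset.sum_product]
  have step1 : ∀ r ∈ Icc 1 n,
      (∑ x ∈ Finset.Icc 1 n ×ˢ Finset.Icc 1 l,
        (if InDiag p ((r, x) : Node) ∧ (m < x.2 ∨ (x.2 = m ∧ x.1 ≤ c)) then (1:ℕ) else 0))
      = ∑ m' ∈ Icc 1 l, (if m < m' then p m' r else if m' = m then min (p m r) c else 0) := by
    intro r hr
    rw [Finset.sum_product]
    rw [Finset.sum_comm]
    refine Finset.sum_congr rfl fun m' hm' => ?_
    simp only [Finset.mem_Icc] at hm'
    rcases lt_trichotomy m m' with h | h | h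
    · rw [if_pos h]
      have : ∀ c' ∈ Icc 1 n,
          (if InDiag p ((r, c', m') : Node) ∧ (m < m' ∨ (m' = m ∧ c' ≤ c)) then (1:ℕ) else 0)
          = (if c' ≤ p m' r then 1 else 0) := by
        intro c' hc'
        simp only [Finset.mem_Icc] at hc'
        simp only [InDiag]
        simp [h, hc'.1]
      rw [Finset.sum_congr rfl this, count_le]
      have := isMP_part_le hp m' r
      omega
    · subst h
      rw [if_neg (lt_irrefl m), if_pos rfl]
      have : ∀ c' ∈ Icc 1 n,
          (if InDiag p ((r, c', m) : Node) ∧ (m < m ∨ (m = m ∧ c' ≤ c)) then (1:ℕ) else 0)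
          = (if c' ≤ min (p m r) c then 1 else 0) := by
        intro c' hc'
        simp only [Finset.mem_Icc] at hc'
        simp only [InDiag, lt_irrefl, eq_self_iff_true, true_and, false_or]
        split_ifs <;> omega
      rw [Finset.sum_congr rfl this, count_le]
      have := isMP_part_le hp m r
      omega
    · rw [if_neg (by omega), if_neg (by omega)]
      refine Finset.sum_eq_zero fun c' hc' => ?_
      rw [if_neg (by omega)]
  rw [Finset.sum_congr rfl step1, Finset.sum_comm]
  have step2 : ∀ m' ∈ Icc 1 l,
      (∑ r ∈ Icc 1 n, (if m < m' then p m' r else if m' = m then min (p m r) c else 0))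
      = (if m < m' then compSize n p m' else if m' = m then ∑ r ∈ Icc 1 n, min (p m r) c else 0) := by
    intro m' _
    rcases lt_trichotomy m m' with h | h | h
    · simp only [if_pos h]; rfl
    · subst h; simp [compSize]
    · rw [if_neg (by omega), if_neg (by omega)]
      exact Finset.sum_eq_zero fun r _ => by rw [if_neg (by omega), if_neg (by omega)]
  rw [Finset.sum_congr rfl step2]
  have hsplit : ∑ m' ∈ Icc (0 + 1) l,
      (if m < m' then compSize n p m' else if m' = m then ∑ r ∈ Icc 1 n, min (p m r) c else 0)
      = ∑ m' ∈ Icc (0 + 1) m,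
        (if m < m' then compSize n p m' else if m' = m then ∑ r ∈ Icc 1 n, min (p m r) c else 0)
      + ∑ m' ∈ Icc (m + 1) l,
        (if m < m' then compSize n p m' else if m' = m then ∑ r ∈ Icc 1 n, min (p m r) c else 0) :=
    sum_Icc_split _ (by omega) hml
  simp only [Nat.zero_add] at hsplit
  rw [hsplit]
  have e1 : ∑ m' ∈ Icc 1 m,
      (if m < m' then compSize n p m' else if m' = m then ∑ r ∈ Icc 1 n, min (p m r) c else 0)
      = ∑ r ∈ Icc 1 n, min (p m r) c := by
    have hm : m = (m - 1) + 1 := by omega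
    rw [hm, Finset.sum_Icc_succ_top (by omega)]
    rw [Finset.sum_eq_zero fun m' hm' => ?_, if_neg (by omega), if_pos rfl, Nat.zero_add, ← hm]
    simp only [Finset.mem_Icc] at hm'
    rw [if_neg (by omega), if_neg (by omega)]
  have e2 : ∑ m' ∈ Icc (m + 1) l,
      (if m < m' then compSize n p m' else if m' = m then ∑ r ∈ Icc 1 n, min (p m r) c else 0)
      = ∑ m' ∈ Icc (m + 1) l, compSize n p m' := by
    refine Finset.sum_congr rfl fun m' hm' => ?_
    simp only [Finset.mem_Icc] at hm'
    rw [if_pos (by omega)]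
  rw [e1, e2, Wstat, sum_colLen]
  omega

lemma RF_one_n {p : ℕ → ℕ → ℕ} (hp : IsMP l n p) {A : Node} :
    A ∈ RF l n p 1 n ↔ InDiag p A := by
  rw [mem_RF hp]
  constructor
  · tauto
  · intro h
    obtain ⟨h1, h2, h3, h4, h5, h6⟩ := inDiag_bounds_s13 hp h
    exact ⟨h, by omega⟩

lemma card_RF_one_n {p : ℕ → ℕ → ℕ} (hp : IsMP l n p) (hl : 1 ≤ l) :
    (RF l n p 1 n).card = n := by
  rw [card_RF hp n le_rfl hl, Wstat, sum_colLen_n hp]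
  have hsplit : ∑ m' ∈ Icc (0 + 1) l, compSize n p m'
      = ∑ m' ∈ Icc (0 + 1) 1, compSize n p m' + ∑ m' ∈ Icc (1 + 1) l, compSize n p m' :=
    sum_Icc_split _ (by omega) hl
  simp only [Nat.zero_add, Finset.Icc_self, Finset.sum_singleton] at hsplit
  have := sum_comp hp
  omega

lemma colTab_surj {p : ℕ → ℕ → ℕ} (hp : IsMP l n p) (hl : 1 ≤ l) {i : ℕ}
    (h1 : 1 ≤ i) (h2 : i ≤ n) : ∃ A, InDiag p A ∧ colTab l n p A = i := by
  classical
  have hinj : Set.InjOn (colTab l n p) (RF l n p 1 n) := by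
    intro A hA B hB h
    exact colTab_inj hp ((RF_one_n hp).mp hA) ((RF_one_n hp).mp hB) h
  have hsub : (RF l n p 1 n).image (colTab l n p) ⊆ Icc 1 n := by
    intro i hi
    simp only [Finset.mem_image] at hi
    obtain ⟨A, hA, rfl⟩ := hi
    have hA' := (RF_one_n hp).mp hA
    simp only [Finset.mem_Icc]
    exact ⟨colTab_pos hp hA', colTab_le_n hp hA'⟩
  have hcard : (Icc 1 n).card ≤ ((RF l n p 1 n).image (colTab l n p)).card := by
    rw [Finset.card_image_of_injOn hinj, card_RF_one_n hp hl, Nat.card_Icc]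
    omega
  have heq := Finset.eq_of_subset_of_card_le hsub hcard
  have : i ∈ (RF l n p 1 n).image (colTab l n p) := by
    rw [heq]; simp [Finset.mem_Icc]; omega
  simp only [Finset.mem_image] at this
  obtain ⟨A, hA, hAi⟩ := this
  exact ⟨A, (RF_one_n hp).mp hA, hAi⟩

lemma isTab_colTab {p : ℕ → ℕ → ℕ} (hp : IsMP l n p) (hl : 1 ≤ l) :
    IsTab n p (colTab l n p) :=
  ⟨fun A hA => ⟨colTab_pos hp hA, colTab_le_n hp hA⟩,
   fun A B hA hB h => colTab_inj hp hA hB h,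
   fun i h1 h2 => colTab_surj hp hl h1 h2⟩

lemma isStd_colTab {p : ℕ → ℕ → ℕ} (hp : IsMP l n p) : IsStd p (colTab l n p) := by
  constructor
  · intro r c m hA hB
    obtain ⟨h1, h2, h3, h4, h5, h6⟩ := inDiag_bounds_s13 hp hA
    simp only at h1 h2 h3 h4 h5 h6
    have hB2 : c + 1 ≤ p m r := hB.2
    have hc : c ≤ p m r := by omega
    have hr : r ≤ colLen n p m c := row_le_colLen hp ⟨h3, hc⟩
    simp only [colTab, Nat.add_sub_cancel]
    have hsplit : ∑ c' ∈ Icc 1 c, colLen n p m c'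
        = ∑ c' ∈ Icc 1 (c - 1), colLen n p m c' + colLen n p m c := by
      have hcc : c = (c - 1) + 1 := by omega
      rw [hcc, Finset.sum_Icc_succ_top (by omega), ← hcc]
    omega
  · intro r c m hA hB
    simp only [colTab]
    omega

end Aux2

section Aux3

open Finset

variable {l n : ℕ}

/-- complementary row-side statistic. -/
def Vstat (n : ℕ) (p : ℕ → ℕ → ℕ) (m c : ℕ) : ℕ :=
  (∑ m' ∈ Finset.Icc 1 (m - 1), compSize n p m') + ∑ r ∈ Finset.Icc 1 n, (p m r - c)

lemma W_add_V {p : ℕ → ℕ → ℕ} (hp : IsMP l n p) {m : ℕ} (c : ℕ) (hm1 : 1 ≤ m) (hml : m ≤ l) :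
    Wstat l n p m c + Vstat n p m c = n := by
  have hQR : ∑ c' ∈ Icc 1 c, colLen n p m c' + ∑ r ∈ Icc 1 n, (p m r - c)
      = compSize n p m := by
    rw [sum_colLen, ← Finset.sum_add_distrib]
    exact Finset.sum_congr rfl fun r _ => by omega
  have hsplit1 : ∑ m' ∈ Icc (0 + 1) l, compSize n p m'
      = ∑ m' ∈ Icc (0 + 1) (m - 1), compSize n p m' + ∑ m' ∈ Icc ((m - 1) + 1) l, compSize n p m' :=
    sum_Icc_split _ (by omega) (by omega)
  have hm : (m - 1) + 1 = m := by omega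
  rw [hm] at hsplit1
  have hsplit2 : ∑ m' ∈ Icc ((m - 1) + 1) l, compSize n p m'
      = ∑ m' ∈ Icc ((m - 1) + 1) m, compSize n p m' + ∑ m' ∈ Icc (m + 1) l, compSize n p m' :=
    sum_Icc_split _ (by omega) hml
  rw [hm, Finset.Icc_self, Finset.sum_singleton] at hsplit2
  have htot := sum_comp hp
  simp only [Nat.zero_add] at hsplit1
  simp only [Wstat, Vstat]
  omega

/-- the filter of long rows is an initial segment. -/
lemma filter_colLen_eq {p : ℕ → ℕ → ℕ} (hp : IsMP l n p) (m : ℕ) {c : ℕ} (hc : 1 ≤ c) :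
    (Icc 1 n).filter (fun r => c ≤ p m r) = Icc 1 (colLen n p m c) := by
  classical
  set S := (Icc 1 n).filter (fun r => c ≤ p m r) with hS
  have hdc : ∀ r ∈ S, ∀ r', 1 ≤ r' → r' ≤ r → r' ∈ S := by
    intro r hr r' h1 h2
    simp only [hS, Finset.mem_filter, Finset.mem_Icc] at hr ⊢
    exact ⟨⟨h1, le_trans h2 hr.1.2⟩, le_trans hr.2 (isMP_anti hp h1 h2)⟩
  have hcard : colLen n p m c = S.card := rfl
  ext r
  simp only [hS, Finset.mem_filter, Finset.mem_Icc]
  constructor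
  · intro hr
    have hsub : Icc 1 r ⊆ S := fun x hx => by
      simp only [Finset.mem_Icc] at hx
      exact hdc r (by simp [hS, Finset.mem_filter, Finset.mem_Icc]; tauto) x hx.1 hx.2
    have : r ≤ S.card := by
      calc r = (Icc 1 r).card := by rw [Nat.card_Icc]; omega
        _ ≤ S.card := Finset.card_le_card hsub
    simp only [Finset.mem_Icc, hcard]
    omega
  · intro hr
    by_contra hcon
    have hnot : ∀ s ∈ S, s ≤ r - 1 := by
      intro s hs
      by_contra hsr
      have hmem : r ∈ S := hdc s hs r (by omega) (by omega)
      simp only [hS, Finset.mem_filter, Finset.mem_Icc] at hmem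
      tauto
    have hsub : S ⊆ Icc 1 (r - 1) := by
      intro s hs
      have h1 : 1 ≤ s := by
        have := Finset.mem_filter.mp hs
        simp only [Finset.mem_Icc] at this
        exact this.1.1
      simp only [Finset.mem_Icc]
      exact ⟨h1, hnot s hs⟩
    have : S.card ≤ r - 1 := by
      calc S.card ≤ (Icc 1 (r - 1)).card := Finset.card_le_card hsub
        _ = r - 1 := by rw [Nat.card_Icc]; omega
    omega

lemma dom_to_V {lam mu : ℕ → ℕ → ℕ} (hlam : IsMP l n lam) (hmu : IsMP l n mu)
    (hdom : Dom l n lam mu) {m : ℕ} (c : ℕ) (hm1 : 1 ≤ m) (hml : m ≤ l) :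
    Vstat n mu m c ≤ Vstat n lam m c := by
  set r₀ := colLen n mu m (c + 1) with hr₀
  have hr₀n : r₀ ≤ n := colLen_le_n m (c + 1)
  have hfil := filter_colLen_eq hmu m (c := c + 1) (by omega)
  rw [← hr₀] at hfil
  have hmem : ∀ r, (1 ≤ r ∧ r ≤ n) ∧ c + 1 ≤ mu m r ↔ 1 ≤ r ∧ r ≤ r₀ := by
    intro r
    have := Finset.ext_iff.mp hfil r
    simpa [Finset.mem_filter, Finset.mem_Icc] using this
  -- key1: tail vanishes
  have key1 : ∑ r ∈ Icc 1 n, (mu m r - c) = ∑ r ∈ Icc 1 r₀, (mu m r - c) := by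
    have hsplit : ∑ r ∈ Icc (0 + 1) n, (mu m r - c)
        = ∑ r ∈ Icc (0 + 1) r₀, (mu m r - c) + ∑ r ∈ Icc (r₀ + 1) n, (mu m r - c) :=
      sum_Icc_split _ (by omega) hr₀n
    simp only [Nat.zero_add] at hsplit
    have hz : ∑ r ∈ Icc (r₀ + 1) n, (mu m r - c) = 0 := by
      refine Finset.sum_eq_zero fun r hr => ?_
      simp only [Finset.mem_Icc] at hr
      have := (hmem r).mp
      have hmur : ¬ (c + 1 ≤ mu m r) := by
        intro hcm
        have := (hmem r).mp ⟨⟨by omega, hr.2⟩, hcm⟩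
        omega
      omega
    omega
  have key2 : ∑ r ∈ Icc 1 r₀, (mu m r - c) + c * r₀ = ∑ r ∈ Icc 1 r₀, mu m r := by
    have : ∀ r ∈ Icc 1 r₀, mu m r - c + c = mu m r := by
      intro r hr
      simp only [Finset.mem_Icc] at hr
      have := (hmem r).mpr hr
      omega
    calc ∑ r ∈ Icc 1 r₀, (mu m r - c) + c * r₀
        = ∑ r ∈ Icc 1 r₀, (mu m r - c + c) := by
          rw [Finset.sum_add_distrib, Finset.sum_const, Nat.card_Icc]
          simp [Nat.mul_comm]
      _ = ∑ r ∈ Icc 1 r₀, mu m r := Finset.sum_congr rfl this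
  have key3 : ∑ r ∈ Icc 1 r₀, lam m r ≤ ∑ r ∈ Icc 1 r₀, (lam m r - c) + c * r₀ := by
    calc ∑ r ∈ Icc 1 r₀, lam m r ≤ ∑ r ∈ Icc 1 r₀, (lam m r - c + c) :=
          Finset.sum_le_sum fun r _ => by omega
      _ = ∑ r ∈ Icc 1 r₀, (lam m r - c) + c * r₀ := by
          rw [Finset.sum_add_distrib, Finset.sum_const, Nat.card_Icc]
          simp [Nat.mul_comm]
  have key4 : ∑ r ∈ Icc 1 r₀, (lam m r - c) ≤ ∑ r ∈ Icc 1 n, (lam m r - c) :=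
    Finset.sum_le_sum_of_subset (Finset.Icc_subset_Icc_right hr₀n)
  have hd := hdom m r₀ hm1 hml
  simp only [Vstat]
  omega

lemma main_step {lam mu : ℕ → ℕ → ℕ} (hlam : IsMP l n lam) (hmu : IsMP l n mu)
    {m r : ℕ}
    (hC : (∑ m' ∈ Icc 1 (m - 1), compSize n mu m') ≤ ∑ m' ∈ Icc 1 (m - 1), compSize n lam m')
    (hV : Vstat n mu m (lam m r) ≤ Vstat n lam m (lam m r))
    (hm1 : 1 ≤ m) (hml : m ≤ l) (h0 : 1 ≤ r) (hrn : r ≤ n) :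
    (∑ m' ∈ Icc 1 (m - 1), compSize n mu m') + ∑ r' ∈ Icc 1 r, mu m r'
      ≤ (∑ m' ∈ Icc 1 (m - 1), compSize n lam m') + ∑ r' ∈ Icc 1 r, lam m r' := by
  set c := lam m r with hc
  have keyA : ∑ r' ∈ Icc 1 n, (lam m r' - c) = ∑ r' ∈ Icc 1 r, (lam m r' - c) := by
    have hsplit : ∑ r' ∈ Icc (0 + 1) n, (lam m r' - c)
        = ∑ r' ∈ Icc (0 + 1) r, (lam m r' - c) + ∑ r' ∈ Icc (r + 1) n, (lam m r' - c) :=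
      sum_Icc_split _ (by omega) hrn
    have hz : ∑ r' ∈ Icc (r + 1) n, (lam m r' - c) = 0 := by
      refine Finset.sum_eq_zero fun r' hr' => ?_
      simp only [Finset.mem_Icc] at hr'
      have := isMP_anti hlam (m := m) h0 (le_of_lt (by omega : r < r'))
      omega
    simp only [Nat.zero_add] at hsplit
    omega
  have keyB : ∑ r' ∈ Icc 1 r, (lam m r' - c) + c * r = ∑ r' ∈ Icc 1 r, lam m r' := by
    have hge : ∀ r' ∈ Icc 1 r, lam m r' - c + c = lam m r' := by
      intro r' hr'
      simp only [Finset.mem_Icc] at hr'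
      have := isMP_anti hlam (m := m) hr'.1 hr'.2
      omega
    calc ∑ r' ∈ Icc 1 r, (lam m r' - c) + c * r
        = ∑ r' ∈ Icc 1 r, (lam m r' - c + c) := by
          rw [Finset.sum_add_distrib, Finset.sum_const, Nat.card_Icc]
          simp [Nat.mul_comm]
      _ = ∑ r' ∈ Icc 1 r, lam m r' := Finset.sum_congr rfl hge
  have keyC : ∑ r' ∈ Icc 1 r, mu m r' ≤ ∑ r' ∈ Icc 1 r, (mu m r' - c) + c * r := by
    calc ∑ r' ∈ Icc 1 r, mu m r' ≤ ∑ r' ∈ Icc 1 r, (mu m r' - c + c) :=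
          Finset.sum_le_sum fun r' _ => by omega
      _ = ∑ r' ∈ Icc 1 r, (mu m r' - c) + c * r := by
          rw [Finset.sum_add_distrib, Finset.sum_const, Nat.card_Icc]
          simp [Nat.mul_comm]
  have keyD : ∑ r' ∈ Icc 1 r, (mu m r' - c) ≤ ∑ r' ∈ Icc 1 n, (mu m r' - c) :=
    Finset.sum_le_sum_of_subset (Finset.Icc_subset_Icc_right hrn)
  simp only [Vstat] at hV
  omega

lemma V_to_dom {lam mu : ℕ → ℕ → ℕ} (hlam : IsMP l n lam) (hmu : IsMP l n mu)
    (hV : ∀ m c, 1 ≤ m → m ≤ l → Vstat n mu m c ≤ Vstat n lam m c) :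
    Dom l n lam mu := by
  intro m r hm1 hml
  have hC : (∑ m' ∈ Icc 1 (m - 1), compSize n mu m') ≤ ∑ m' ∈ Icc 1 (m - 1), compSize n lam m' := by
    have := hV m n hm1 hml
    simp only [Vstat] at this
    have hz1 : ∑ r' ∈ Icc 1 n, (mu m r' - n) = 0 :=
      Finset.sum_eq_zero fun r' _ => by have := isMP_part_le hmu m r'; omega
    have hz2 : ∑ r' ∈ Icc 1 n, (lam m r' - n) = 0 :=
      Finset.sum_eq_zero fun r' _ => by have := isMP_part_le hlam m r'; omega
    omega
  -- reduce to r ≤ n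
  rcases Nat.lt_or_ge n r with hrn | hrn
  · -- tail of sums beyond n vanish
    have htail : ∀ (p : ℕ → ℕ → ℕ), IsMP l n p →
        ∑ r' ∈ Icc 1 r, p m r' = ∑ r' ∈ Icc 1 n, p m r' := by
      intro p hp
      have hsplit : ∑ r' ∈ Icc (0 + 1) r, p m r'
          = ∑ r' ∈ Icc (0 + 1) n, p m r' + ∑ r' ∈ Icc (n + 1) r, p m r' :=
        sum_Icc_split _ (by omega) (by omega)
      have hz : ∑ r' ∈ Icc (n + 1) r, p m r' = 0 :=
        Finset.sum_eq_zero fun r' hr' => by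
          simp only [Finset.mem_Icc] at hr'
          exact hp.1 m r' (by omega)
      simp only [Nat.zero_add] at hsplit
      omega
    rw [htail mu hmu, htail lam hlam]
    rcases Nat.eq_zero_or_pos n with h0 | h0
    · subst h0; simpa using hC
    · -- apply the r ≤ n case with r := n; inline below via c := lam m n
      have := hV m (lam m n) hm1 hml
      exact main_step hlam hmu hC this hm1 hml h0 le_rfl
  · rcases Nat.eq_zero_or_pos r with h0 | h0
    · subst h0; simpa using hC
    · have := hV m (lam m r) hm1 hml
      exact main_step hlam hmu hC this hm1 hml h0 hrn

end Aux3

section Main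

open Finset

lemma weaklyLeft_trans {A B C : Node} (h1 : WeaklyLeft A B) (h2 : WeaklyLeft B C) :
    WeaklyLeft A C := by
  simp only [WeaklyLeft] at *
  omega

theorem stdColDom_nonempty_iff_dom' (l n : ℕ) (hl : 1 ≤ l) (hn : 1 ≤ n)
    (lam mu : ℕ → ℕ → ℕ) (hlam : IsMP l n lam) (hmu : IsMP l n mu) :
    (∃ t : Node → ℕ, IsTab n mu t ∧ IsStd mu t ∧ ColDomOn l n lam mu t n) ↔
      Dom l n lam mu := by
  constructor
  · rintro ⟨t, htab, -, hdom⟩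
    refine V_to_dom hlam hmu fun m c hm1 hml => ?_
    -- enough: Wstat lam m c ≤ Wstat mu m c
    have hW : Wstat l n lam m c ≤ Wstat l n mu m c := by
      rw [← card_RF hlam c hm1 hml, ← card_RF hmu c hm1 hml]
      have key : ∀ B ∈ RF l n lam m c,
          ∃ A, A ∈ RF l n mu m c ∧ t A = colTab l n lam B := by
        intro B hB
        obtain ⟨hBd, hBreg⟩ := (mem_RF hlam).mp hB
        have hi1 : 1 ≤ colTab l n lam B := colTab_pos hlam hBd
        have hi2 : colTab l n lam B ≤ n := colTab_le_n hlam hBd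
        obtain ⟨A, hAd, hAt⟩ := htab.2.2 (colTab l n lam B) hi1 hi2
        have hwl : WeaklyLeft A B := hdom (colTab l n lam B) A B hi1 hi2 hAd hAt hBd rfl
        refine ⟨A, (mem_RF hmu).mpr ⟨hAd, ?_⟩, hAt⟩
        simp only [WeaklyLeft] at hwl
        omega
      classical
      set f : Node → Node := fun B =>
        if h : ∃ A, A ∈ RF l n mu m c ∧ t A = colTab l n lam B then h.choose else B with hf
      refine Finset.card_le_card_of_injOn f (fun B hB => ?_) ?_
      · have h := key B hB
        simp only [hf, dif_pos h]
        exact h.choose_spec.1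
      · intro B₁ hB₁ B₂ hB₂ heq
        simp only [Finset.mem_coe] at hB₁ hB₂
        have h₁ := key B₁ hB₁
        have h₂ := key B₂ hB₂
        simp only [hf, dif_pos h₁, dif_pos h₂] at heq
        have e₁ := h₁.choose_spec.2
        have e₂ := h₂.choose_spec.2
        rw [heq] at e₁
        have : colTab l n lam B₁ = colTab l n lam B₂ := e₁.symm.trans e₂
        exact colTab_inj hlam ((mem_RF hlam).mp hB₁).1 ((mem_RF hlam).mp hB₂).1 this
    have b1 := W_add_V hlam c hm1 hml
    have b2 := W_add_V hmu c hm1 hml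
    omega
  · intro hdom
    refine ⟨colTab l n mu, isTab_colTab hmu hl, isStd_colTab hmu, ?_⟩
    intro i A B hi1 hi2 hAd hAt hBd hBt
    by_contra hwl
    have hAb := inDiag_bounds_s13 hmu hAd
    have hBb := inDiag_bounds_s13 hlam hBd
    have hcond : A.2.2 < B.2.2 ∨ (A.2.2 = B.2.2 ∧ B.2.1 < A.2.1) := by
      simp only [WeaklyLeft] at hwl
      omega
    have hlt : Wstat l n mu B.2.2 B.2.1 < colTab l n mu A :=
      W_lt_colTab hmu hAd hBb.2.2.2.2.2 hcond
    have hle : colTab l n lam B ≤ Wstat l n lam B.2.2 B.2.1 := colTab_le_W hlam hBd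
    have hV := dom_to_V hlam hmu hdom B.2.1 hBb.2.2.2.2.1 hBb.2.2.2.2.2
    have b1 := W_add_V hlam B.2.1 hBb.2.2.2.2.1 hBb.2.2.2.2.2
    have b2 := W_add_V hmu B.2.1 hBb.2.2.2.2.1 hBb.2.2.2.2.2
    omega

end Main

/-- `Std_λ(μ)` is non-empty iff `λ ⊵ μ`. -/
theorem stdColDom_nonempty_iff_dom (l n : ℕ) (hl : 1 ≤ l) (hn : 1 ≤ n)
    (lam mu : ℕ → ℕ → ℕ) (hlam : IsMP l n lam) (hmu : IsMP l n mu) :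
    (∃ t : Node → ℕ, IsTab n mu t ∧ IsStd mu t ∧ ColDomOn l n lam mu t n) ↔
      Dom l n lam mu := by
  exact stdColDom_nonempty_iff_dom' l n hl hn lam mu hlam hmu

end FS
end
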